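/- Let v ∈ A = 𝔽_q[θ] be a monic irreducible polynomial of degree d and λ ∈ ℂ_∞ a root of v. Then (−1)^d · v = ∏_{i=1}^{d} ω(λ^{q^i})^{q−1}, where ω is the Anderson–Thakur function. -/

import Mathlib

section AuxOmegaAT
open Polynomial Filter

lemma aux_norm_one_sub {K : Type*} [NormedField K] [IsUltrametricDist K]
    (y : K) (hy : ‖y‖ < 1) : ‖1 - y‖ = 1 := by
  rw [sub_eq_add_neg, IsUltrametricDist.norm_add_eq_max_of_norm_ne_norm]
  · simp [le_of_lt hy]
  · simp [hy.ne', (by simpa using hy : ‖(-y)‖ < ‖(1:K)‖).ne']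

lemma aux_factor_norm {K : Type*} [NormedField K] [IsUltrametricDist K]
    {θc t : K} (hθ : 1 < ‖θc‖) (ht : ‖t‖ ≤ 1) {q : ℕ} (hq : 0 < q) (j : ℕ) :
    ‖(1 - t / θc ^ q ^ j)⁻¹‖ = 1 := by
  have h1 : (1:ℝ) < ‖θc‖ ^ q ^ j := one_lt_pow₀ hθ (Nat.pos_iff_ne_zero.mp (pow_pos hq j))
  have h2 : ‖t / θc ^ q ^ j‖ < 1 := by
    rw [norm_div, norm_pow, div_lt_one (lt_trans one_pos h1)]
    exact lt_of_le_of_lt ht h1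
  rw [norm_inv, aux_norm_one_sub _ h2, inv_one]

lemma aux_partial_norm {K : Type*} [NormedField K] [IsUltrametricDist K]
    {θc t ι : K} (hθ : 1 < ‖θc‖) (ht : ‖t‖ ≤ 1) {q : ℕ} (hq : 0 < q) (N : ℕ) :
    ‖ι * ∏ j ∈ Finset.range N, (1 - t / θc ^ q ^ j)⁻¹‖ = ‖ι‖ := by
  rw [norm_mul, norm_prod]
  rw [Finset.prod_congr rfl fun j _ => aux_factor_norm hθ ht hq j]
  simp

lemma aux_omega_norm {K : Type*} [NormedField K] [IsUltrametricDist K]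
    {θc t ι w : K} (hθ : 1 < ‖θc‖) (ht : ‖t‖ ≤ 1) {q : ℕ} (hq : 0 < q)
    (h : Tendsto (fun N => ι * ∏ j ∈ Finset.range N, (1 - t / θc ^ q ^ j)⁻¹)
      atTop (nhds w)) : ‖w‖ = ‖ι‖ := by
  have := h.norm
  simp only [aux_partial_norm hθ ht hq] at this
  exact tendsto_nhds_unique this tendsto_const_nhds

lemma aux_funceq {K : Type*} [NormedField K] [IsUltrametricDist K] {θc ι : K} {q : ℕ}
    (hq : 1 < q) (hθ : 1 < ‖θc‖) (hι : ι ^ (q - 1) = -θc)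
    (hsub : ∀ a b : K, (a - b) ^ q = a ^ q - b ^ q)
    {t w w' : K} (ht : ‖t‖ ≤ 1)
    (h : Tendsto (fun N => ι * ∏ j ∈ Finset.range N, (1 - t / θc ^ q ^ j)⁻¹)
      atTop (nhds w))
    (h' : Tendsto (fun N => ι * ∏ j ∈ Finset.range N, (1 - t ^ q / θc ^ q ^ j)⁻¹)
      atTop (nhds w')) :
    w ^ q = (t ^ q - θc) * w' := by
  have hθ0 : θc ≠ 0 := by
    intro h0; rw [h0] at hθ; simp at hθ; linarith
  have htq : ‖t ^ q‖ ≤ 1 := by rw [norm_pow]; exact pow_le_one₀ (norm_nonneg t) ht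
  have hfac : ‖t ^ q / θc‖ < 1 := by
    rw [norm_div, div_lt_one (lt_trans one_pos hθ)]; exact lt_of_le_of_lt htq hθ
  have hne : (1 - t ^ q / θc) ≠ 0 := by
    intro h0
    have := aux_norm_one_sub _ hfac
    rw [h0] at this; simp at this
  have hιq : ι ^ q = -θc * ι := by
    have : ι ^ q = ι ^ (q - 1) * ι := by
      rw [← pow_succ, Nat.sub_add_cancel (le_of_lt hq)]
    rw [this, hι]
  have key : ∀ N, (ι * ∏ j ∈ Finset.range N, (1 - t / θc ^ q ^ j)⁻¹) ^ q
      = (t ^ q - θc) * (ι * ∏ j ∈ Finset.range (N + 1), (1 - t ^ q / θc ^ q ^ j)⁻¹) := by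
    intro N
    have hfactor : ∀ j : ℕ, ((1 - t / θc ^ q ^ j)⁻¹) ^ q = ((1 - t ^ q / θc ^ q ^ (j + 1))⁻¹) := by
      intro j
      rw [inv_pow, hsub, one_pow, div_pow, ← pow_mul, ← pow_succ]
    rw [mul_pow, ← Finset.prod_pow, Finset.prod_congr rfl fun j _ => hfactor j,
      Finset.prod_range_succ', hιq, pow_zero, pow_one]
    have h3 : t ^ q - θc = -θc * (1 - t ^ q / θc) := by
      field_simp
      ring
    have : (t ^ q - θc) * (1 - t ^ q / θc)⁻¹ = -θc := by
      rw [h3, mul_assoc, mul_inv_cancel₀ hne, mul_one]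
    calc -θc * ι * ∏ j ∈ Finset.range N, (1 - t ^ q / θc ^ q ^ (j + 1))⁻¹
        = (t ^ q - θc) * (1 - t ^ q / θc)⁻¹ * ι
            * ∏ j ∈ Finset.range N, (1 - t ^ q / θc ^ q ^ (j + 1))⁻¹ := by rw [this]
      _ = _ := by ring
  have h1 : Tendsto (fun N => (ι * ∏ j ∈ Finset.range N, (1 - t / θc ^ q ^ j)⁻¹) ^ q)
      atTop (nhds (w ^ q)) := h.pow q
  have h2 : Tendsto (fun N =>
      (t ^ q - θc) * (ι * ∏ j ∈ Finset.range (N + 1), (1 - t ^ q / θc ^ q ^ j)⁻¹))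
      atTop (nhds ((t ^ q - θc) * w')) :=
    ((h'.comp (tendsto_add_atTop_nat 1)).const_mul _)
  rw [funext key] at h1
  exact tendsto_nhds_unique h1 h2

open IntermediateField in
lemma aux_pow_card_eq (Fq : Type) [Field Fq] [Fintype Fq]
    {K : Type} [Field K] [Algebra Fq K]
    (v : Polynomial Fq) (hmonic : v.Monic) (hirr : Irreducible v)
    (lam : K) (hlam : Polynomial.aeval lam v = 0) :
    lam ^ (Fintype.card Fq) ^ v.natDegree = lam := by
  have hint : IsIntegral Fq lam := ⟨v, hmonic, hlam⟩
  haveI := IntermediateField.adjoin.finiteDimensional hint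
  haveI : Finite (Fq⟮lam⟯) := Module.finite_of_finite Fq
  haveI : Fintype (Fq⟮lam⟯) := Fintype.ofFinite _
  have hminpoly : minpoly Fq lam = v := (minpoly.eq_of_irreducible_of_monic hirr hlam hmonic).symm
  have hfinrank : Module.finrank Fq (Fq⟮lam⟯) = v.natDegree := by
    rw [IntermediateField.adjoin.finrank hint, hminpoly]
  have hcard : Fintype.card (Fq⟮lam⟯) = (Fintype.card Fq) ^ v.natDegree := by
    rw [Module.card_eq_pow_finrank (K := Fq) (V := Fq⟮lam⟯), hfinrank]
  set x : Fq⟮lam⟯ := ⟨lam, mem_adjoin_simple_self Fq lam⟩ with hx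
  have := FiniteField.pow_card x
  rw [hcard] at this
  have := congrArg (Subtype.val) this
  push_cast at this
  exact this

lemma aux_fixed_mem_range (Fq : Type) [Field Fq] [Fintype Fq]
    {K : Type} [Field K] [Algebra Fq K]
    (c : K) (hc : c ^ (Fintype.card Fq) = c) :
    c ∈ Set.range (algebraMap Fq K) := by
  classical
  set q := Fintype.card Fq with hqdef
  have hq : 1 < q := Fintype.one_lt_card
  have hdeg : (X ^ q - X : K[X]).natDegree = q := by
    rw [natDegree_sub_eq_left_of_natDegree_lt] <;>
      simp [Polynomial.natDegree_X_pow, Polynomial.natDegree_X, hq]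
  have hp0 : (X ^ q - X : K[X]) ≠ 0 := by
    intro h; rw [h] at hdeg; simp at hdeg; omega
  have hTS : Finset.univ.image (algebraMap Fq K) ⊆ (X ^ q - X : K[X]).roots.toFinset := by
    intro x hx
    rw [Finset.mem_image] at hx
    obtain ⟨a, -, rfl⟩ := hx
    rw [Multiset.mem_toFinset, mem_roots hp0]
    simp only [IsRoot.def, eval_sub, eval_pow, eval_X]
    rw [← map_pow, FiniteField.pow_card, sub_self]
  have hcardT : (Finset.univ.image (algebraMap Fq K)).card = q := by
    rw [Finset.card_image_of_injective _ (algebraMap Fq K).injective, Finset.card_univ]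
  have hcardS : (X ^ q - X : K[X]).roots.toFinset.card ≤ q :=
    (Multiset.toFinset_card_le _).trans ((Polynomial.card_roots' _).trans_eq hdeg)
  have hST : Finset.univ.image (algebraMap Fq K) = (X ^ q - X : K[X]).roots.toFinset :=
    Finset.eq_of_subset_of_card_le hTS (by omega)
  have hcS : c ∈ (X ^ q - X : K[X]).roots.toFinset := by
    rw [Multiset.mem_toFinset, mem_roots hp0]
    simp [IsRoot.def, hc]
  rw [← hST, Finset.mem_image] at hcS
  obtain ⟨a, -, ha⟩ := hcS
  exact ⟨a, ha⟩

lemma aux_cyclic {M : Type*} [CommMonoidWithZero M] [IsCancelMulZero M] (f : ℕ → M) (d : ℕ)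
    (hone : f 1 ≠ 0) (hf : f (d + 1) = f 1) :
    ∏ i ∈ Finset.Icc 1 d, f (i + 1) = ∏ i ∈ Finset.Icc 1 d, f i := by
  have conv : ∀ g : ℕ → M, ∏ i ∈ Finset.Icc 1 d, g i = ∏ i ∈ Finset.range d, g (1 + i) := by
    intro g
    rw [← Finset.Ico_add_one_right_eq_Icc, Finset.prod_Ico_eq_prod_range]
    simp
  rw [conv, conv]
  set g : ℕ → M := fun i => f (1 + i) with hg
  have h1 : ∏ i ∈ Finset.range (d + 1), g i = (∏ i ∈ Finset.range d, g (i + 1)) * g 0 :=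
    Finset.prod_range_succ' g d
  have h2 : ∏ i ∈ Finset.range (d + 1), g i = (∏ i ∈ Finset.range d, g i) * g d :=
    Finset.prod_range_succ g d
  have hg0 : g 0 = f 1 := by simp [hg]
  have hgd : g d = f 1 := by simp only [hg]; rw [Nat.add_comm]; exact hf
  have key : (∏ i ∈ Finset.range d, g (i + 1)) * f 1 = (∏ i ∈ Finset.range d, g i) * f 1 := by
    rw [← hg0, ← h1, h2, hgd]
  have := mul_right_cancel₀ hone key
  calc ∏ i ∈ Finset.range d, f (1 + (i + 1)) = ∏ i ∈ Finset.range d, g (i + 1) := by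
        apply Finset.prod_congr rfl; intro i _; simp [hg, Nat.add_assoc]
    _ = ∏ i ∈ Finset.range d, g i := this
    _ = ∏ i ∈ Finset.range d, f (1 + i) := rfl

lemma aux_frob_sub (Fq : Type) [Field Fq] [Fintype Fq]
    {K : Type} [Field K] [Algebra Fq K] (a b : K) :
    (a - b) ^ (Fintype.card Fq) = a ^ (Fintype.card Fq) - b ^ (Fintype.card Fq) := by
  obtain ⟨p, hc⟩ := CharP.exists Fq
  haveI := hc
  obtain ⟨n, hp, hcard⟩ := FiniteField.card Fq p
  haveI : Fact p.Prime := ⟨hp⟩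
  haveI : CharP K p := charP_of_injective_algebraMap (algebraMap Fq K).injective p
  rw [hcard]
  exact sub_pow_char_pow a b _

lemma aux_map_eq_prod (Fq : Type) [Field Fq] [Fintype Fq]
    {K : Type} [Field K] [Algebra Fq K]
    (v : Polynomial Fq) (hmonic : v.Monic) (hirr : Irreducible v)
    (d : ℕ) (hd : v.natDegree = d)
    (lam : K) (hlam : Polynomial.aeval lam v = 0) :
    v.map (algebraMap Fq K)
      = ∏ i ∈ Finset.Icc 1 d, (X - C (lam ^ (Fintype.card Fq) ^ i)) := by
  classical
  set q := Fintype.card Fq with hqdef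
  have hq : 1 < q := Fintype.one_lt_card
  have hd0 : 0 < d := hd ▸ hirr.natDegree_pos
  have hfix : lam ^ q ^ d = lam := by
    have := aux_pow_card_eq Fq v hmonic hirr lam hlam
    rwa [hd] at this
  set g : K[X] := ∏ i ∈ Finset.Icc 1 d, (X - C (lam ^ q ^ i)) with hg
  have hgmonic : g.Monic := monic_prod_of_monic _ _ fun i _ => monic_X_sub_C _
  have hgdeg : g.natDegree = d := by
    rw [hg, natDegree_prod _ _ fun i _ => X_sub_C_ne_zero _]
    simp only [natDegree_X_sub_C, Finset.sum_const, Nat.card_Icc, smul_eq_mul, mul_one]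
    omega
  -- the coefficients of g are fixed by the q-power Frobenius
  have hmapfrob : ∀ k, (g.coeff k) ^ q = g.coeff k := by
    have hpow : ∀ (x : K) (m : ℕ), (lam ^ q ^ m) ^ q = lam ^ q ^ (m + 1) := by
      intro x m; rw [← pow_mul, ← pow_succ]
    have hcyc : ∏ i ∈ Finset.Icc 1 d, (X - C (lam ^ q ^ (i + 1)))
        = ∏ i ∈ Finset.Icc 1 d, (X - C (lam ^ q ^ i)) := by
      apply aux_cyclic (fun i => (X - C (lam ^ q ^ i) : K[X])) d
      · exact X_sub_C_ne_zero _
      · have h5 : lam ^ q ^ (d + 1) = lam ^ q ^ 1 := by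
          rw [pow_succ, pow_mul, hfix, pow_one]
        simp only [h5]
    -- Frobenius as a ring hom
    obtain ⟨p, hc⟩ := CharP.exists Fq
    haveI := hc
    obtain ⟨n, hp, hcard⟩ := FiniteField.card Fq p
    haveI : Fact p.Prime := ⟨hp⟩
    haveI : CharP K p := charP_of_injective_algebraMap (algebraMap Fq K).injective p
    haveI : ExpChar K p := ExpChar.prime hp
    set F : K →+* K := iterateFrobenius K p n with hF
    have hFx : ∀ x : K, F x = x ^ q := by
      intro x; rw [hF, iterateFrobenius_def, hqdef, hcard]
    have hmap : g.map F = g := by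
      conv_lhs => rw [hg]
      rw [Polynomial.map_prod]
      have : ∀ i ∈ Finset.Icc 1 d, (X - C (lam ^ q ^ i)).map F
          = (X - C (lam ^ q ^ (i + 1))) := by
        intro i _
        rw [Polynomial.map_sub, map_X, map_C, hFx, ← pow_mul, ← pow_succ]
      rw [Finset.prod_congr rfl this, hcyc, hg]
    intro k
    have := congrArg (fun P => Polynomial.coeff P k) hmap
    simpa [Polynomial.coeff_map, hFx] using this
  have hlift : g ∈ Polynomial.lifts (algebraMap Fq K) := by
    rw [Polynomial.lifts_iff_coeff_lifts]
    intro m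
    exact aux_fixed_mem_range Fq _ (hmapfrob m)
  obtain ⟨w, hwmap, hwdeg, hwmonic⟩ := Polynomial.lifts_and_natDegree_eq_and_monic hlift hgmonic
  -- w vanishes at lam
  have hwlam : Polynomial.aeval lam w = 0 := by
    rw [Polynomial.aeval_def, Polynomial.eval₂_eq_eval_map, hwmap, hg]
    rw [Polynomial.eval_prod]
    apply Finset.prod_eq_zero (Finset.mem_Icc.mpr ⟨hd0, le_refl d⟩)
    simp [hfix]
  have hminpoly : minpoly Fq lam = v := (minpoly.eq_of_irreducible_of_monic hirr hlam hmonic).symm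
  have hdvd : v ∣ w := hminpoly ▸ minpoly.dvd Fq lam hwlam
  obtain ⟨c, hc⟩ := hdvd
  have hc0 : c ≠ 0 := by
    intro h; rw [h, mul_zero] at hc; exact hwmonic.ne_zero hc
  have hcdeg : c.natDegree = 0 := by
    have := hwdeg.trans hgdeg
    rw [hc, natDegree_mul hmonic.ne_zero hc0, hd] at this
    omega
  have hcmonic : c.Monic := hmonic.of_mul_monic_left (hc ▸ hwmonic)
  have hc1 : c = 1 := hcmonic.natDegree_eq_zero.mp hcdeg
  have hwv : w = v := by rw [hc, hc1, mul_one]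
  rw [← hwv, hwmap, hg]

end AuxOmegaAT


noncomputable section
open Polynomial Filter

variable (Fq : Type) [Field Fq] [Fintype Fq]
variable (Cinf : Type) [NontriviallyNormedField Cinf] [CompleteSpace Cinf]
  [IsAlgClosed Cinf] [IsUltrametricDist Cinf] [Algebra Fq Cinf]

/-- **Evaluation of the Anderson–Thakur function at the roots of a monic
irreducible.** Let `v ∈ A = 𝔽_q[θ]` be monic irreducible of degree `d` and
`λ ∈ ℂ_∞` a root of `v`.  Then `(-1)^d · v = ∏_{i=1}^{d} ω(λ^{q^i})^{q-1}`,
where `ω(x) = ι ∏_{j≥0} (1 - x/θ^{q^j})⁻¹` (the infinite product converging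
for `|x| ≤ 1`, in particular at the roots of unity `λ^{q^i}`). -/
theorem omega_at_roots_of_irreducible
    (θc : Cinf) (hθ : ‖θc‖ = (Fintype.card Fq : ℝ))
    (ι : Cinf) (hι : ι ^ (Fintype.card Fq - 1) + θc = 0)
    (ωv : Cinf → Cinf)
    (hω : ∀ x : Cinf, ‖x‖ ≤ 1 →
      Tendsto (fun N => ι * ∏ j ∈ Finset.range N, (1 - x / θc ^ (Fintype.card Fq) ^ j)⁻¹)
        atTop (nhds (ωv x)))
    (v : Polynomial Fq) (hmonic : v.Monic) (hirr : Irreducible v)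
    (d : ℕ) (hd : v.natDegree = d)
    (lam : Cinf) (hlam : Polynomial.aeval lam v = 0) :
    (-1 : Cinf) ^ d * Polynomial.aeval θc v =
      ∏ i ∈ Finset.Icc 1 d, (ωv (lam ^ (Fintype.card Fq) ^ i)) ^ (Fintype.card Fq - 1) := by
  classical
  set q := Fintype.card Fq with hqdef
  have hq : 1 < q := Fintype.one_lt_card
  have hq0 : 0 < q := by omega
  have hθ1 : 1 < ‖θc‖ := by rw [hθ]; exact_mod_cast hq
  have hι' : ι ^ (q - 1) = -θc := by rw [eq_neg_iff_add_eq_zero]; exact hι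
  have hd0 : 0 < d := hd ▸ hirr.natDegree_pos
  have hfix : lam ^ q ^ d = lam := by
    have := aux_pow_card_eq Fq v hmonic hirr lam hlam
    rwa [hd] at this
  -- norm of lam
  have hlamnorm : ‖lam‖ ≤ 1 := by
    by_contra hcon
    push_neg at hcon
    have h1 : ‖lam‖ ^ (q ^ d) = ‖lam‖ := by
      rw [← norm_pow, hfix]
    have h2 : (1 : ℕ) < q ^ d := one_lt_pow₀ hq (by omega)
    have h3 : ‖lam‖ ^ 1 < ‖lam‖ ^ (q ^ d) := pow_lt_pow_right₀ hcon h2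
    rw [pow_one, h1] at h3
    exact lt_irrefl _ h3
  set t : ℕ → Cinf := fun i => lam ^ q ^ i with ht
  have htle : ∀ i, ‖t i‖ ≤ 1 := by
    intro i; rw [ht]; simp only [norm_pow]
    exact pow_le_one₀ (norm_nonneg lam) hlamnorm
  have htq : ∀ i, t i ^ q = t (i + 1) := by
    intro i; rw [ht]; simp only [← pow_mul, ← pow_succ]
  have htd : t (d + 1) = t 1 := by
    simp only [ht]
    rw [pow_succ, pow_mul, hfix, pow_one]
  have hι0 : ι ≠ 0 := by
    intro h0
    rw [h0, zero_pow (by omega : q - 1 ≠ 0)] at hι'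
    have hθ0 : θc = 0 := neg_eq_zero.mp hι'.symm
    rw [hθ0, norm_zero] at hθ1
    linarith
  have hωnorm : ∀ i, ‖ωv (t i)‖ = ‖ι‖ := fun i =>
    aux_omega_norm hθ1 (htle i) hq0 (hω _ (htle i))
  have hωne : ∀ i, ωv (t i) ≠ 0 := by
    intro i h0
    have := hωnorm i
    rw [h0, norm_zero] at this
    exact hι0 (norm_eq_zero.mp this.symm)
  have hsub : ∀ a b : Cinf, (a - b) ^ q = a ^ q - b ^ q := aux_frob_sub Fq
  have hfe : ∀ i, ωv (t i) ^ q = (t (i + 1) - θc) * ωv (t (i + 1)) := by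
    intro i
    have := aux_funceq hq hθ1 hι' hsub (htle i) (hω _ (htle i))
      (by rw [htq i]; exact hω _ (htle (i + 1)))
    rwa [htq i] at this
  have htne : ∀ i, t i - θc ≠ 0 := by
    intro i h0
    have h1 : t i = θc := sub_eq_zero.mp h0
    have h2 := htle i
    rw [h1] at h2
    linarith
  -- product identity via cancellation
  have hBne : (∏ i ∈ Finset.Icc 1 d, ωv (t i)) ≠ 0 :=
    Finset.prod_ne_zero_iff.mpr fun i _ => hωne i
  have key : (∏ i ∈ Finset.Icc 1 d, ωv (t i) ^ (q - 1)) * (∏ i ∈ Finset.Icc 1 d, ωv (t i))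
      = (∏ i ∈ Finset.Icc 1 d, (t i - θc)) * (∏ i ∈ Finset.Icc 1 d, ωv (t i)) := by
    rw [← Finset.prod_mul_distrib]
    have h1 : ∀ i ∈ Finset.Icc 1 d, ωv (t i) ^ (q - 1) * ωv (t i) = ωv (t i) ^ q := by
      intro i _
      rw [← pow_succ, Nat.sub_add_cancel (le_of_lt hq)]
    rw [Finset.prod_congr rfl h1, Finset.prod_congr rfl fun i _ => hfe i]
    have h2 : ∏ i ∈ Finset.Icc 1 d, ((t (i + 1) - θc) * ωv (t (i + 1)))
        = ∏ i ∈ Finset.Icc 1 d, ((t i - θc) * ωv (t i)) := by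
      apply aux_cyclic (fun i => (t i - θc) * ωv (t i)) d
      · exact mul_ne_zero (htne 1) (hωne 1)
      · rw [htd]
    rw [h2, Finset.prod_mul_distrib]
  have hA : ∏ i ∈ Finset.Icc 1 d, ωv (t i) ^ (q - 1)
      = ∏ i ∈ Finset.Icc 1 d, (t i - θc) := mul_right_cancel₀ hBne key
  -- evaluate v at θc
  have heval : Polynomial.aeval θc v = ∏ i ∈ Finset.Icc 1 d, (θc - t i) := by
    rw [Polynomial.aeval_def, Polynomial.eval₂_eq_eval_map,
      aux_map_eq_prod Fq v hmonic hirr d hd lam hlam, Polynomial.eval_prod]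
    apply Finset.prod_congr rfl
    intro i _
    rw [Polynomial.eval_sub, Polynomial.eval_X, Polynomial.eval_C]
  have hsign : ∏ i ∈ Finset.Icc 1 d, (t i - θc)
      = (-1 : Cinf) ^ d * ∏ i ∈ Finset.Icc 1 d, (θc - t i) := by
    have : ∀ i ∈ Finset.Icc 1 d, t i - θc = (-1) * (θc - t i) := by
      intro i _; ring
    rw [Finset.prod_congr rfl this, Finset.prod_mul_distrib, Finset.prod_const,
      Nat.card_Icc]
    norm_num
  rw [heval, hA, hsign]
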